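/- For every θ ∈ ℝ, the operator norm of the 2×2 matrix [[cos θ, sin θ],[0, cos θ]] is at most 2/√3, and the supremum over θ of these norms equals 2/√3. -/

import Mathlib

open Matrix
open scoped Matrix.Norms.L2Operator

private lemma key_scalar (c s : ℝ) (h : c^2 + s^2 = 1) (a b : ℂ) :
    ‖(c:ℂ)*a + s*b‖^2 + ‖(c:ℂ)*b‖^2 ≤ 4/3 * (‖a‖^2 + ‖b‖^2) := by
  have h1 : ∀ z : ℂ, ‖z‖^2 = z.re^2 + z.im^2 := by
    intro z
    rw [← Complex.normSq_eq_norm_sq, Complex.normSq_apply]; ring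
  simp only [h1, Complex.add_re, Complex.add_im, Complex.mul_re, Complex.mul_im,
    Complex.ofReal_re, Complex.ofReal_im]
  ring_nf
  nlinarith [sq_nonneg (3*c^2-2), sq_nonneg ((4-3*c^2)*a.re - 3*c*s*b.re),
    sq_nonneg ((4-3*c^2)*a.im - 3*c*s*b.im), sq_nonneg a.re, sq_nonneg a.im,
    sq_nonneg b.re, sq_nonneg b.im]

private lemma sqrt43 : Real.sqrt (4/3) = 2 / Real.sqrt 3 := by
  rw [show (4:ℝ)/3 = (2/Real.sqrt 3)^2 by
    rw [div_pow, Real.sq_sqrt] <;> norm_num]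
  exact Real.sqrt_sq (by positivity)

private lemma norm_le_aux (c s : ℝ) (h : c^2+s^2=1) :
    ‖(!![(c:ℂ), s; 0, c] : Matrix (Fin 2) (Fin 2) ℂ)‖ ≤ 2/Real.sqrt 3 := by
  rw [Matrix.l2_opNorm_def]
  refine ContinuousLinearMap.opNorm_le_bound _ (by positivity) fun x => ?_
  simp only [LinearEquiv.trans_apply, Matrix.toEuclideanLin_apply,
    LinearMap.coe_toContinuousLinearMap']
  rw [EuclideanSpace.norm_eq, EuclideanSpace.norm_eq, ← sqrt43,
    ← Real.sqrt_mul (by norm_num)]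
  refine Real.sqrt_le_sqrt ?_
  simp only [Fin.sum_univ_two, WithLp.equiv_symm_apply, PiLp.toLp_apply, Matrix.mulVec,
    dotProduct, Fin.sum_univ_two, Matrix.cons_val', Matrix.cons_val_zero,
    Matrix.cons_val_one, Matrix.head_cons, Matrix.empty_val', Matrix.cons_val_fin_one,
    Matrix.head_fin_const]
  have := key_scalar c s h (x 0) (x 1)
  simpa using this

private lemma norm_ge_aux :
    2/Real.sqrt 3 ≤ ‖(!![((Real.sqrt (2/3):ℝ):ℂ), ((Real.sqrt (1/3):ℝ):ℂ);
      0, ((Real.sqrt (2/3):ℝ):ℂ)] : Matrix (Fin 2) (Fin 2) ℂ)‖ := by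
  set c : ℝ := Real.sqrt (2/3) with hc
  set s : ℝ := Real.sqrt (1/3) with hs
  set M : Matrix (Fin 2) (Fin 2) ℂ := !![(c:ℂ), s; 0, c] with hM
  set v : EuclideanSpace ℂ (Fin 2) :=
    (WithLp.equiv 2 (Fin 2 → ℂ)).symm ![1, (Real.sqrt 2 : ℂ)] with hv
  have hle := M.l2_opNorm_mulVec v
  have hvnorm : ‖v‖ = Real.sqrt 3 := by
    rw [EuclideanSpace.norm_eq]
    simp [hv, Fin.sum_univ_two]
    norm_num
  have hsc : s * Real.sqrt 2 = c := by
    rw [hs, hc, ← Real.sqrt_mul (by norm_num)]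
    norm_num
  have hc2 : c^2 = 2/3 := Real.sq_sqrt (by norm_num)
  have hMv : ‖(EuclideanSpace.equiv (Fin 2) ℂ).symm (M *ᵥ v)‖ = 2 := by
    rw [EuclideanSpace.norm_eq]
    simp only [Fin.sum_univ_two, EuclideanSpace.equiv, hv, hM]
    simp only [PiLp.continuousLinearEquiv_symm_apply, WithLp.equiv_symm_apply, PiLp.toLp_apply,
      Matrix.mulVec, dotProduct, Fin.sum_univ_two, Matrix.cons_val', Matrix.cons_val_zero,
      Matrix.cons_val_one, Matrix.head_cons, Matrix.empty_val', Matrix.cons_val_fin_one,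
      Matrix.head_fin_const]
    norm_num [Matrix.cons_val_zero, Matrix.cons_val_one, Matrix.head_cons]
    rw [show ((c:ℂ) + (s:ℂ) * ((Real.sqrt 2:ℝ):ℂ)) = ((c + s * Real.sqrt 2 : ℝ):ℂ) by
      push_cast; ring]
    rw [Complex.norm_real, Real.norm_eq_abs, hsc, show c + c = 2*c from by ring,
        abs_of_nonneg (by positivity : (0:ℝ) ≤ 2*c), abs_of_nonneg (Real.sqrt_nonneg 2),
        abs_of_nonneg (show (0:ℝ) ≤ c from Real.sqrt_nonneg _)]
    have h2 : Real.sqrt 2 ^ 2 = 2 := Real.sq_sqrt (by norm_num)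
    have h4 : (2*c)^2 + (c*Real.sqrt 2)^2 = 4 := by
      rw [mul_pow, mul_pow, h2, hc2]; norm_num
    rw [h4, show (4:ℝ) = 2^2 by norm_num, Real.sqrt_sq (by norm_num)]
  rw [hMv, hvnorm] at hle
  rw [div_le_iff₀ (by positivity)]
  linarith

/-- For every `θ`, the operator norm of `[[cos θ, sin θ],[0, cos θ]]` is at most `2/√3`,
and the supremum over `θ` of these norms equals `2/√3`. -/
theorem rotation_matrix_norm_bound :
    (∀ θ : ℝ, ‖(!![(Real.cos θ : ℂ), (Real.sin θ : ℂ); 0, (Real.cos θ : ℂ)] :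
        Matrix (Fin 2) (Fin 2) ℂ)‖ ≤ 2 / Real.sqrt 3) ∧
    (⨆ θ : ℝ, ‖(!![(Real.cos θ : ℂ), (Real.sin θ : ℂ); 0, (Real.cos θ : ℂ)] :
        Matrix (Fin 2) (Fin 2) ℂ)‖) = 2 / Real.sqrt 3 := by
  have part1 : ∀ θ : ℝ, ‖(!![(Real.cos θ : ℂ), (Real.sin θ : ℂ); 0, (Real.cos θ : ℂ)] :
      Matrix (Fin 2) (Fin 2) ℂ)‖ ≤ 2 / Real.sqrt 3 := fun θ =>
    norm_le_aux (Real.cos θ) (Real.sin θ) (Real.cos_sq_add_sin_sq θ)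
  refine ⟨part1, le_antisymm (ciSup_le part1) ?_⟩
  set θ₀ : ℝ := Real.arccos (Real.sqrt (2/3)) with hθ₀
  have hcos : Real.cos θ₀ = Real.sqrt (2/3) :=
    Real.cos_arccos (le_trans (by norm_num) (Real.sqrt_nonneg _)) (by
      rw [show (1:ℝ) = Real.sqrt 1 from (Real.sqrt_one).symm]
      exact Real.sqrt_le_sqrt (by norm_num))
  have hsin : Real.sin θ₀ = Real.sqrt (1/3) := by
    rw [hθ₀, Real.sin_arccos, Real.sq_sqrt (by norm_num : (0:ℝ) ≤ 2/3)]
    norm_num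
  have hbdd : BddAbove (Set.range fun θ : ℝ =>
      ‖(!![(Real.cos θ : ℂ), (Real.sin θ : ℂ); 0, (Real.cos θ : ℂ)] :
        Matrix (Fin 2) (Fin 2) ℂ)‖) := ⟨2 / Real.sqrt 3, by
    rintro _ ⟨θ, rfl⟩; exact part1 θ⟩
  refine le_trans ?_ (le_ciSup hbdd θ₀)
  rw [hcos, hsin]
  exact norm_ge_aux
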